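/- A graph G is weak bicritical with γ(G) = 2 if and only if there exists an integer m ≥ 1 such that the complement of G is isomorphic to one of the following graphs: the disjoint union of m copies of K₂; the disjoint union of m copies of K₂ with one copy of K₃; or the disjoint union of m − 1 copies of K₂ with one copy of the path P₃ on 3 vertices. In particular, a graph G is 2-critical if and only if the complement of G is isomorphic to the disjoint union of m copies of K₂ for some m ≥ 1. -/

import Mathlib

open SimpleGraph Set

set_option linter.unusedSectionVars false

/-- `S` is a dominating set of the induced subgraph of `G` on the vertex set `A`:
`S ⊆ A` and every vertex of `A` is in the closed neighborhood of some vertex of `S`. -/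
def IsDomOn {V : Type*} (G : SimpleGraph V) (A S : Set V) : Prop :=
  S ⊆ A ∧ ∀ v ∈ A, ∃ s ∈ S, s = v ∨ G.Adj s v

/-- The domination number of the induced subgraph of `G` on the vertex set `A`. -/
noncomputable def domNumOn {V : Type*} (G : SimpleGraph V) (A : Set V) : ℕ :=
  sInf {n | ∃ S : Set V, IsDomOn G A S ∧ S.ncard = n}

/-- The domination number of `G`. -/
noncomputable def domNum {V : Type*} (G : SimpleGraph V) : ℕ :=
  domNumOn G Set.univ

/-- `y` is a critical vertex of the induced subgraph of `G` on `A`: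
deleting `y` decreases the domination number. -/
def IsCritVertexOn {V : Type*} (G : SimpleGraph V) (A : Set V) (y : V) : Prop :=
  domNumOn G (A \ {y}) < domNumOn G A

/-- The induced subgraph of `G` on `A` is critical: all its vertices are critical. -/
def CriticalOn {V : Type*} (G : SimpleGraph V) (A : Set V) : Prop :=
  ∀ y ∈ A, IsCritVertexOn G A y

/-- The induced subgraph of `G` on `A` is weak bicritical: no vertex deletion increases the
domination number (`V⁺ = ∅`), and deleting any vertex that keeps the domination number
unchanged (a vertex of `V⁰`) yields a critical graph. -/
def WeakBicriticalOn {V : Type*} (G : SimpleGraph V) (A : Set V) : Prop :=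
  (∀ y ∈ A, domNumOn G (A \ {y}) ≤ domNumOn G A) ∧
  (∀ y ∈ A, domNumOn G (A \ {y}) = domNumOn G A → CriticalOn G (A \ {y}))

/-- The disjoint union of m copies of K₂. -/
def mK2 (m : ℕ) : SimpleGraph (Fin m × Fin 2) :=
  SimpleGraph.fromRel (fun p q => p.1 = q.1)

/-- The disjoint union of m copies of K₂ together with one copy of K₃. -/
def mK2K3 (m : ℕ) : SimpleGraph ((Fin m × Fin 2) ⊕ Fin 3) :=
  SimpleGraph.fromRel (fun p q =>
    match p, q with
    | Sum.inl a, Sum.inl b => a.1 = b.1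
    | Sum.inr _, Sum.inr _ => True
    | _, _ => False)

/-- The disjoint union of m copies of K₂ together with one copy of the path P₃. -/
def mK2P3 (m : ℕ) : SimpleGraph ((Fin m × Fin 2) ⊕ Fin 3) :=
  SimpleGraph.fromRel (fun p q =>
    match p, q with
    | Sum.inl a, Sum.inl b => a.1 = b.1
    | Sum.inr i, Sum.inr j => (i : ℕ) + 1 = (j : ℕ)
    | _, _ => False)

section Part1
variable {V : Type*} [Fintype V] {G : SimpleGraph V}

lemma dom_iff {s v : V} : (s = v ∨ G.Adj s v) ↔ ¬Gᶜ.Adj s v := by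
  rw [SimpleGraph.compl_adj]
  constructor
  · rintro (rfl | h) ⟨hne, hna⟩
    exacts [hne rfl, hna h]
  · intro h
    by_cases hs : s = v
    · exact Or.inl hs
    · exact Or.inr (by_contra fun hn => h ⟨hs, hn⟩)

lemma isDomOn_self (A : Set V) : IsDomOn G A A :=
  ⟨subset_rfl, fun v hv => ⟨v, hv, Or.inl rfl⟩⟩

lemma domNumOn_le_iff {A : Set V} {n : ℕ} :
    domNumOn G A ≤ n ↔ ∃ S, IsDomOn G A S ∧ S.ncard ≤ n := by
  constructor
  · intro h
    have hne : {k | ∃ S : Set V, IsDomOn G A S ∧ S.ncard = k}.Nonempty :=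
      ⟨A.ncard, A, isDomOn_self A, rfl⟩
    obtain ⟨S, hS, hc⟩ := Nat.sInf_mem hne
    exact ⟨S, hS, hc.le.trans h⟩
  · rintro ⟨S, hS, hc⟩
    exact le_trans (Nat.sInf_le ⟨S, hS, rfl⟩) hc

lemma domNumOn_le_one_iff {A : Set V} :
    domNumOn G A ≤ 1 ↔ (A = ∅ ∨ ∃ u ∈ A, ∀ w ∈ A, ¬Gᶜ.Adj u w) := by
  rw [domNumOn_le_iff]
  constructor
  · rintro ⟨S, hS, hc⟩
    have hfin : S.Finite := Set.toFinite S
    interval_cases h : S.ncard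
    · have hSe : S = ∅ := (Set.ncard_eq_zero hfin).mp h
      subst hSe
      left
      ext v
      simp only [Set.mem_empty_iff_false, iff_false]
      intro hv
      obtain ⟨s, hs, -⟩ := hS.2 v hv
      exact hs
    · obtain ⟨u, hu⟩ := Set.ncard_eq_one.mp h
      subst hu
      right
      refine ⟨u, hS.1 rfl, fun w hw => ?_⟩
      obtain ⟨s, hs, hd⟩ := hS.2 w hw
      rw [Set.mem_singleton_iff] at hs
      subst hs
      exact dom_iff.mp hd
  · rintro (hA | ⟨u, hu, hdom⟩)
    · subst hA
      exact ⟨∅, ⟨subset_rfl, fun v hv => absurd hv (Set.notMem_empty v)⟩, by simp⟩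
    · refine ⟨{u}, ⟨Set.singleton_subset_iff.mpr hu, fun w hw => ⟨u, rfl, dom_iff.mpr (hdom w hw)⟩⟩, by simp⟩

lemma domNumOn_le_two_iff {A : Set V} :
    domNumOn G A ≤ 2 ↔
      (A = ∅ ∨ ∃ u ∈ A, ∃ v ∈ A, ∀ w ∈ A, ¬Gᶜ.Adj u w ∨ ¬Gᶜ.Adj v w) := by
  constructor
  · intro h
    rw [domNumOn_le_iff] at h
    obtain ⟨S, hS, hc⟩ := h
    have hfin : S.Finite := Set.toFinite S
    interval_cases h2 : S.ncard
    · have hSe : S = ∅ := (Set.ncard_eq_zero hfin).mp h2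
      subst hSe
      left
      ext v
      simp only [Set.mem_empty_iff_false, iff_false]
      intro hv
      obtain ⟨s, hs, -⟩ := hS.2 v hv
      exact hs
    · obtain ⟨u, hu⟩ := Set.ncard_eq_one.mp h2
      subst hu
      right
      refine ⟨u, hS.1 rfl, u, hS.1 rfl, fun w hw => ?_⟩
      obtain ⟨s, hs, hd⟩ := hS.2 w hw
      rw [Set.mem_singleton_iff] at hs
      subst hs
      exact Or.inl (dom_iff.mp hd)
    · obtain ⟨u, v, huv, hS2⟩ := Set.ncard_eq_two.mp h2
      subst hS2
      right
      refine ⟨u, hS.1 (by simp), v, hS.1 (by simp), fun w hw => ?_⟩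
      obtain ⟨s, hs, hd⟩ := hS.2 w hw
      rcases hs with hs | hs
      · subst hs; exact Or.inl (dom_iff.mp hd)
      · rw [Set.mem_singleton_iff] at hs; subst hs; exact Or.inr (dom_iff.mp hd)
  · rintro (hA | ⟨u, hu, v, hv, hdom⟩)
    · subst hA
      exact domNumOn_le_iff.mpr ⟨∅, ⟨subset_rfl, fun w hw => absurd hw (Set.notMem_empty w)⟩, by simp⟩
    · refine domNumOn_le_iff.mpr ⟨{u, v}, ⟨?_, fun w hw => ?_⟩, ?_⟩
      · intro x hx
        rcases hx with hx | hx
        · subst hx; exact hu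
        · rw [Set.mem_singleton_iff] at hx; subst hx; exact hv
      · rcases hdom w hw with hd | hd
        · exact ⟨u, by simp, dom_iff.mpr hd⟩
        · exact ⟨v, by simp, dom_iff.mpr hd⟩
      · exact le_trans (Set.ncard_insert_le u {v}) (by simp)

end Part1

def CondC {V : Type*} (H : SimpleGraph V) : Prop :=
  Nonempty V ∧ (∀ u, ∃ w, H.Adj u w) ∧
  (∃ u v : V, ∀ w, ¬H.Adj u w ∨ ¬H.Adj v w) ∧
  (∀ y : V, ∃ u, u ≠ y ∧ ∀ w, H.Adj u w → w = y)

def CondW {V : Type*} (H : SimpleGraph V) : Prop :=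
  Nonempty V ∧ (∀ u, ∃ w, H.Adj u w) ∧
  (∃ u v : V, ∀ w, ¬H.Adj u w ∨ ¬H.Adj v w) ∧
  (∀ y : V, ∃ u, u ≠ y ∧ ∃ v, v ≠ y ∧ ∀ w, w ≠ y → (¬H.Adj u w ∨ ¬H.Adj v w)) ∧
  (∀ y z : V, z ≠ y → (∀ u, u ≠ y → ∃ w, w ≠ y ∧ H.Adj u w) →
    ((∀ u : V, u = y ∨ u = z) ∨ ∃ u, u ≠ y ∧ u ≠ z ∧ ∀ w, H.Adj u w → w = y ∨ w = z))

section Part2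
set_option linter.unusedSectionVars false
variable {V : Type*} [Fintype V] {G : SimpleGraph V}

lemma diag_mem_diff {y w : V} : w ∈ (Set.univ \ {y} : Set V) ↔ w ≠ y := by simp
lemma diag_mem_diff2 {y z w : V} : w ∈ ((Set.univ \ {y}) \ {z} : Set V) ↔ w ≠ y ∧ w ≠ z := by
  constructor
  · intro h
    simp at h
    tauto
  · intro h
    simp
    tauto

lemma diff_empty_iff {y : V} : (Set.univ \ {y} : Set V) = ∅ ↔ ∀ u : V, u = y := by
  rw [Set.eq_empty_iff_forall_notMem]
  simp

lemma diff2_empty_iff {y z : V} :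
    ((Set.univ \ {y}) \ {z} : Set V) = ∅ ↔ ∀ u : V, u = y ∨ u = z := by
  rw [Set.eq_empty_iff_forall_notMem]
  constructor
  · intro h u
    have := h u
    rw [diag_mem_diff2] at this
    tauto
  · intro h u hu
    rw [diag_mem_diff2] at hu
    rcases h u with h' | h' <;> tauto

lemma domNum_eq_two_iff :
    domNum G = 2 ↔ (Nonempty V ∧ (∀ u : V, ∃ w, Gᶜ.Adj u w) ∧
      ∃ u v : V, ∀ w, ¬Gᶜ.Adj u w ∨ ¬Gᶜ.Adj v w) := by
  have h : domNum G = 2 ↔ (domNumOn G Set.univ ≤ 2 ∧ ¬(domNumOn G Set.univ ≤ 1)) := by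
    unfold domNum; omega
  rw [h, domNumOn_le_two_iff, domNumOn_le_one_iff]
  push_neg
  simp only [Set.mem_univ, true_and, true_implies, Set.univ_eq_empty_iff, not_isEmpty_iff]
  constructor
  · rintro ⟨hemp | hpair, hne, hni⟩
    · exact (hemp.false hne.some).elim
    · exact ⟨⟨hne.some⟩, hni, hpair⟩
  · rintro ⟨hne, hni, hpair⟩
    exact ⟨Or.inr hpair, ⟨hne.some, trivial⟩, hni⟩

/-- deleting y keeps domination ≤ 2 iff ... -/
lemma del_le_two_iff {y : V} :
    domNumOn G (Set.univ \ {y}) ≤ 2 ↔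
      ((∀ u : V, u = y) ∨
        ∃ u, u ≠ y ∧ ∃ v, v ≠ y ∧ ∀ w, w ≠ y → (¬Gᶜ.Adj u w ∨ ¬Gᶜ.Adj v w)) := by
  rw [domNumOn_le_two_iff, diff_empty_iff]
  constructor
  · rintro (h | ⟨u, hu, v, hv, hd⟩)
    · exact Or.inl h
    · rw [diag_mem_diff] at hu hv
      exact Or.inr ⟨u, hu, v, hv, fun w hw => hd w (diag_mem_diff.mpr hw)⟩
  · rintro (h | ⟨u, hu, v, hv, hd⟩)
    · exact Or.inl h
    · exact Or.inr ⟨u, diag_mem_diff.mpr hu, v, diag_mem_diff.mpr hv,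
        fun w hw => hd w (diag_mem_diff.mp hw)⟩

lemma del_le_one_iff {y : V} :
    domNumOn G (Set.univ \ {y}) ≤ 1 ↔
      ((∀ u : V, u = y) ∨ ∃ u, u ≠ y ∧ ∀ w, Gᶜ.Adj u w → w = y) := by
  rw [domNumOn_le_one_iff, diff_empty_iff]
  constructor
  · rintro (h | ⟨u, hu, hd⟩)
    · exact Or.inl h
    · rw [diag_mem_diff] at hu
      refine Or.inr ⟨u, hu, fun w hw => ?_⟩
      by_contra hne
      exact hd w (diag_mem_diff.mpr hne) hw
  · rintro (h | ⟨u, hu, hd⟩)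
    · exact Or.inl h
    · refine Or.inr ⟨u, diag_mem_diff.mpr hu, fun w hw hadj => ?_⟩
      exact (diag_mem_diff.mp hw) (hd w hadj)

lemma del2_le_one_iff {y z : V} :
    domNumOn G ((Set.univ \ {y}) \ {z}) ≤ 1 ↔
      ((∀ u : V, u = y ∨ u = z) ∨
        ∃ u, u ≠ y ∧ u ≠ z ∧ ∀ w, Gᶜ.Adj u w → w = y ∨ w = z) := by
  rw [domNumOn_le_one_iff, diff2_empty_iff]
  constructor
  · rintro (h | ⟨u, hu, hd⟩)
    · exact Or.inl h
    · rw [diag_mem_diff2] at hu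
      refine Or.inr ⟨u, hu.1, hu.2, fun w hw => ?_⟩
      by_contra hne
      push_neg at hne
      exact hd w (diag_mem_diff2.mpr hne) hw
  · rintro (h | ⟨u, hu1, hu2, hd⟩)
    · exact Or.inl h
    · refine Or.inr ⟨u, diag_mem_diff2.mpr ⟨hu1, hu2⟩, fun w hw hadj => ?_⟩
      rw [diag_mem_diff2] at hw
      rcases hd w hadj with h' | h' <;> tauto

/-- γ(G−y) ≥ 2 part: not ≤ 1, i.e. no isolated vertex in H − y and nonempty -/
lemma del_not_le_one_iff {y : V} :
    ¬(domNumOn G (Set.univ \ {y}) ≤ 1) ↔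
      ((∃ u : V, u ≠ y) ∧ ∀ u : V, u ≠ y → ∃ w, w ≠ y ∧ Gᶜ.Adj u w) := by
  rw [del_le_one_iff]
  push_neg
  constructor
  · rintro ⟨⟨u, hu⟩, h2⟩
    refine ⟨⟨u, hu⟩, fun v hv => ?_⟩
    obtain ⟨w, hw, hwy⟩ := h2 v hv
    exact ⟨w, hwy, hw⟩
  · rintro ⟨⟨u, hu⟩, h2⟩
    refine ⟨⟨u, hu⟩, fun v hv => ?_⟩
    obtain ⟨w, hwy, hw⟩ := h2 v hv
    exact ⟨w, hw, hwy⟩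

theorem crit_iff_condC :
    (CriticalOn G Set.univ ∧ domNum G = 2) ↔ CondC Gᶜ := by
  constructor
  · rintro ⟨hcrit, h2⟩
    obtain ⟨hne, hni, hpair⟩ := domNum_eq_two_iff.mp h2
    refine ⟨hne, hni, hpair, fun y => ?_⟩
    have hlt := hcrit y (Set.mem_univ y)
    unfold IsCritVertexOn at hlt
    have : domNumOn G (Set.univ \ {y}) ≤ 1 := by
      have h2' : domNumOn G Set.univ = 2 := h2
      omega
    rcases del_le_one_iff.mp this with h | h
    · obtain ⟨w, hw⟩ := hni y
      exact absurd (h w) hw.ne'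
    · exact h
  · rintro ⟨hne, hni, hpair, hcrit⟩
    have h2 : domNum G = 2 := domNum_eq_two_iff.mpr ⟨hne, hni, hpair⟩
    refine ⟨fun y _ => ?_, h2⟩
    unfold IsCritVertexOn
    have h1 : domNumOn G (Set.univ \ {y}) ≤ 1 := by
      rcases hcrit y with ⟨u, hu, hd⟩
      exact del_le_one_iff.mpr (Or.inr ⟨u, hu, hd⟩)
    have h2' : domNumOn G Set.univ = 2 := h2
    omega

theorem wbc_iff_condW :
    (WeakBicriticalOn G Set.univ ∧ domNum G = 2) ↔ CondW Gᶜ := by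
  constructor
  · rintro ⟨⟨hwb1, hwb2⟩, h2⟩
    obtain ⟨hne, hni, hpair⟩ := domNum_eq_two_iff.mp h2
    have h2' : domNumOn G Set.univ = 2 := h2
    refine ⟨hne, hni, hpair, fun y => ?_, fun y z hzy hniso => ?_⟩
    · have hle : domNumOn G (Set.univ \ {y}) ≤ 2 := by
        have := hwb1 y (Set.mem_univ y)
        omega
      rcases del_le_two_iff.mp hle with h | h
      · obtain ⟨w, hw⟩ := hni y
        exact absurd (h w) hw.ne'
      · exact h
    · -- y z, z ≠ y, no isolated in H − y; conclude criticality statement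
      have hgey : ¬(domNumOn G (Set.univ \ {y}) ≤ 1) :=
        del_not_le_one_iff.mpr ⟨⟨z, hzy⟩, hniso⟩
      have hley : domNumOn G (Set.univ \ {y}) ≤ 2 := by
        have := hwb1 y (Set.mem_univ y)
        omega
      have heq : domNumOn G (Set.univ \ {y}) = domNumOn G Set.univ := by omega
      have hcr := hwb2 y (Set.mem_univ y) heq z (diag_mem_diff.mpr hzy)
      unfold IsCritVertexOn at hcr
      have : domNumOn G ((Set.univ \ {y}) \ {z}) ≤ 1 := by omega
      exact del2_le_one_iff.mp this
  · rintro ⟨hne, hni, hpair, hw1, hw2⟩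
    have h2 : domNum G = 2 := domNum_eq_two_iff.mpr ⟨hne, hni, hpair⟩
    have h2' : domNumOn G Set.univ = 2 := h2
    refine ⟨⟨fun y _ => ?_, fun y _ heq z hz => ?_⟩, h2⟩
    · have : domNumOn G (Set.univ \ {y}) ≤ 2 :=
        del_le_two_iff.mpr (Or.inr (hw1 y))
      omega
    · unfold IsCritVertexOn
      rw [diag_mem_diff] at hz
      have hniso : ∀ u : V, u ≠ y → ∃ w, w ≠ y ∧ Gᶜ.Adj u w := by
        have : ¬(domNumOn G (Set.univ \ {y}) ≤ 1) := by omega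
        exact (del_not_le_one_iff.mp this).2
      have := hw2 y z hz hniso
      have h1 : domNumOn G ((Set.univ \ {y}) \ {z}) ≤ 1 := del2_le_one_iff.mpr this
      omega

end Part2

def Matchy {V : Type*} (H : SimpleGraph V) (B : Set V) : Prop :=
  ∀ v ∈ B, ∃ w ∈ B, H.Adj v w ∧ ∀ x, H.Adj v x → x = w

def StI {V : Type*} (H : SimpleGraph V) : Prop := Nonempty V ∧ Matchy H Set.univ

def StII {V : Type*} (H : SimpleGraph V) : Prop :=
  ∃ a b c : V, a ≠ b ∧ a ≠ c ∧ b ≠ c ∧ H.Adj a b ∧ H.Adj a c ∧ H.Adj b c ∧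
    (∀ x, H.Adj a x → x = b ∨ x = c) ∧ (∀ x, H.Adj b x → x = a ∨ x = c) ∧
    (∀ x, H.Adj c x → x = a ∨ x = b) ∧ (∃ d : V, d ≠ a ∧ d ≠ b ∧ d ≠ c) ∧
    Matchy H {v | v ≠ a ∧ v ≠ b ∧ v ≠ c}

def StIII {V : Type*} (H : SimpleGraph V) : Prop :=
  ∃ a b c : V, a ≠ b ∧ a ≠ c ∧ b ≠ c ∧ H.Adj a b ∧ H.Adj b c ∧ ¬H.Adj a c ∧
    (∀ x, H.Adj a x → x = b) ∧ (∀ x, H.Adj b x → x = a ∨ x = c) ∧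
    (∀ x, H.Adj c x → x = b) ∧ Matchy H {v | v ≠ a ∧ v ≠ b ∧ v ≠ c}

section Part3
variable {V : Type*} {H : SimpleGraph V}

/-- for v in B, the Matchy partner facts -/
lemma Matchy.partner {B : Set V} (hm : Matchy H B) {v : V} (hv : v ∈ B) :
    ∃ w ∈ B, H.Adj v w ∧ (∀ x, H.Adj v x → x = w) ∧ (∀ x, H.Adj w x → x = v) := by
  obtain ⟨w, hwB, hadj, huniq⟩ := hm v hv
  obtain ⟨w', hw'B, hadj', huniq'⟩ := hm w hwB
  have hw'v : w' = v := (huniq' v hadj.symm).symm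
  exact ⟨w, hwB, hadj, huniq, hw'v ▸ huniq'⟩

theorem condC_iff_stI : CondC H ↔ StI H := by
  constructor
  · rintro ⟨hne, hni, hpair, hcrit⟩
    refine ⟨hne, fun v _ => ?_⟩
    obtain ⟨u, huv, hNu⟩ := hcrit v
    have hadj_uv : H.Adj u v := by
      obtain ⟨w, hw⟩ := hni u
      exact (hNu w hw) ▸ hw
    obtain ⟨u', hu'u, hNu'⟩ := hcrit u
    have hadj_u'u : H.Adj u' u := by
      obtain ⟨w, hw⟩ := hni u'
      exact (hNu' w hw) ▸ hw
    have hu'v : u' = v := hNu u' hadj_u'u.symm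
    subst hu'v
    exact ⟨u, trivial, hadj_uv.symm, hNu'⟩
  · rintro ⟨hne, hm⟩
    obtain ⟨v0⟩ := id hne
    obtain ⟨w0, -, hadj0, huniq0, huniq0'⟩ := hm.partner (Set.mem_univ v0)
    refine ⟨hne, fun u => ?_, ⟨v0, w0, fun w => ?_⟩, fun y => ?_⟩
    · obtain ⟨w, -, hadj, -⟩ := hm u (Set.mem_univ u)
      exact ⟨w, hadj⟩
    · by_cases h : H.Adj v0 w
      · have : w = w0 := huniq0 w h
        subst this
        exact Or.inr (H.irrefl)
      · exact Or.inl h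
    · obtain ⟨w, -, hadj, -, huniq'⟩ := hm.partner (Set.mem_univ y)
      exact ⟨w, hadj.ne', huniq'⟩

theorem condW_structure (hc : CondW H) : StI H ∨ StII H ∨ StIII H := by
  obtain ⟨hne, hni, hpair, hw1, hw2⟩ := hc
  -- Pendant predicate
  set P : V → Prop := fun y => ∃ u, u ≠ y ∧ ∀ x, H.Adj u x → x = y with hP
  set XX : V → Prop := fun v => ∃ w1 w2, w1 ≠ w2 ∧ H.Adj v w1 ∧ H.Adj v w2 with hXX
  have Q' : ∀ y, ¬P y → ∀ z, z ≠ y →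
      ∃ u, u ≠ y ∧ u ≠ z ∧ H.Adj u z ∧ ∀ w, H.Adj u w → w = y ∨ w = z := by
    intro y hp z hzy
    have hniso : ∀ u, u ≠ y → ∃ w, w ≠ y ∧ H.Adj u w := by
      intro u huy
      by_contra hcon
      push_neg at hcon
      refine hp ⟨u, huy, fun x hx => ?_⟩
      by_contra hxy
      exact hcon x hxy hx
    rcases hw2 y z hzy hniso with hall | ⟨u, huy, huz, hN⟩
    · obtain ⟨w, hw⟩ := hni y
      have hwz : w = z := by
        rcases hall w with h | h
        · exact absurd h hw.ne'
        · exact h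
      subst hwz
      refine absurd ⟨w, hzy, fun x hx => ?_⟩ hp
      rcases hall x with h | h
      · exact h
      · exact absurd (h ▸ hx) H.irrefl
    · by_cases hz : H.Adj u z
      · exact ⟨u, huy, huz, hz, hN⟩
      · refine absurd ⟨u, huy, fun x hx => ?_⟩ hp
        rcases hN x hx with h | h
        · exact h
        · exact absurd (h ▸ hx) hz
  by_cases hX : ∃ x, XX x
  · by_cases hPX : ∃ x, XX x ∧ P x
    · -- Case A: StIII
      right; right
      obtain ⟨x, hXx, u, hux, hNu⟩ := hPX
      have hadj_ux : H.Adj u x := by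
        obtain ⟨w, hw⟩ := hni u
        exact (hNu w hw) ▸ hw
      have hPu : ¬P u := by
        rintro ⟨s, hsu, hNs⟩
        have hadj_su : H.Adj s u := by
          obtain ⟨w, hw⟩ := hni s
          exact (hNs w hw) ▸ hw
        have hsx : s = x := hNu s hadj_su.symm
        subst hsx
        obtain ⟨w1, w2, h12, ha1, ha2⟩ := hXx
        exact h12 ((hNs w1 ha1).trans (hNs w2 ha2).symm)
      have hQA : ∀ z, z ≠ u → (∀ w, H.Adj x w → w = u ∨ w = z) ∨
          ∃ s, s ≠ u ∧ s ≠ z ∧ s ≠ x ∧ H.Adj s z ∧ ∀ w, H.Adj s w → w = z := by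
        intro z hzu
        obtain ⟨s, h1, h2, h3, h4⟩ := Q' u hPu z hzu
        by_cases hsx : s = x
        · subst hsx
          exact Or.inl h4
        · refine Or.inr ⟨s, h1, h2, hsx, h3, fun w hw => ?_⟩
          rcases h4 w hw with h | h
          · exact absurd (hNu s (h ▸ hw).symm) hsx
          · exact h
      -- pick second neighbor t of x, t ≠ u
      obtain ⟨w1, w2, h12, ha1, ha2⟩ := hXx
      obtain ⟨t, hadj_xt, htu⟩ : ∃ t, H.Adj x t ∧ t ≠ u := by
        by_cases h : w1 = u
        · exact ⟨w2, ha2, fun hh => h12 (h.trans hh.symm)⟩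
        · exact ⟨w1, ha1, h⟩
      have C1 : ∀ w, H.Adj x w → w = u ∨ w = t := by
        rcases hQA t htu with h | ⟨p, hpu, hpt, hpx, hadj_pt, hNp⟩
        · exact h
        · exfalso
          rcases hQA p hpu with h | ⟨q, hqu, hqp, hqx, hadj_qp, hNq⟩
          · rcases h t hadj_xt with h' | h'
            · exact htu h'
            · subst h'
              have : H.Adj t x := hadj_xt.symm
              exact hadj_xt.ne (hNp x this)
          · have hqt : q = t := hNp q hadj_qp.symm
            subst hqt
            exact hpx (hNq x hadj_xt.symm).symm
      have hNt : ∀ w, H.Adj t w → w = x := by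
        intro w hw
        by_contra hwx
        have hwu : w ≠ u := by
          intro h
          subst h
          exact hadj_xt.ne (hNu t hw.symm).symm
        have htw : t ≠ w := hw.ne
        rcases hQA w hwu with h | ⟨s, hsu, hsw, hsx, hadj_sw, hNs⟩
        · rcases h t hadj_xt with h' | h'
          · exact htu h'
          · exact htw h'
        · rcases hQA s hsu with h | ⟨q, hqu, hqs, hqx, hadj_qs, hNq⟩
          · rcases h t hadj_xt with h' | h'
            · exact htu h'
            · subst h'
              exact hwx (hNs x hadj_xt.symm).symm
          · have hqw : q = w := hNs q hadj_qs.symm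
            subst hqw
            have hts : t = s := hNq t hw.symm
            subst hts
            exact hwx (hNs x hadj_xt.symm).symm
      have hXout : ∀ v, v ≠ x → v ≠ u → v ≠ t → ¬XX v := by
        rintro v hvx hvu hvt ⟨z1, z2, hz12, hb1, hb2⟩
        rcases hQA v hvu with h | ⟨q, hqu, hqv, hqx, hadj_qv, hNq⟩
        · rcases h t hadj_xt with h' | h'
          · exact htu h'
          · exact hvt h'.symm
        · rcases hQA q hqu with h | ⟨s, hsu, hsq, hsx, hadj_sq, hNs⟩
          · rcases h t hadj_xt with h' | h'
            · exact htu h'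
            · subst h'
              exact hvx (hNq x hadj_xt.symm).symm
          · have hsv : s = v := hNq s hadj_sq.symm
            subst hsv
            exact hz12 ((hNs z1 hb1).trans (hNs z2 hb2).symm)
      refine ⟨u, x, t, hux, fun h => htu h.symm, hadj_xt.ne, hadj_ux, hadj_xt, ?_, hNu, C1, hNt, ?_⟩
      · intro h
        exact hadj_xt.ne (hNu t h).symm
      · rintro v ⟨h1, h2, h3⟩
        obtain ⟨w, hw⟩ := hni v
        refine ⟨w, ⟨?_, ?_, ?_⟩, hw, fun z hz => ?_⟩
        · intro h
          subst h
          exact h2 (hNu v hw.symm)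
        · intro h
          subst h
          rcases C1 v hw.symm with h' | h'
          · exact h1 h'
          · exact h3 h'
        · intro h
          subst h
          exact h2 (hNt v hw.symm)
        · by_contra hzw
          exact hXout v h2 h1 h3 ⟨z, w, hzw, hz, hw⟩
    · -- Case B: StII
      right; left
      push_neg at hPX
      obtain ⟨x0, hXx0⟩ := hX
      obtain ⟨w1, w2, h12, ha1, ha2⟩ := id hXx0
      obtain ⟨c0, hc1, hc2, hadj_cw1, hNc⟩ := Q' x0 (hPX x0 hXx0) w1 ha1.ne'
      have hadj_cx0 : H.Adj c0 x0 := by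
        by_contra hcon
        have hXw1 : XX w1 := ⟨x0, c0, Ne.symm hc1, ha1.symm, hadj_cw1.symm⟩
        refine hPX w1 hXw1 ⟨c0, hc2, fun w hw => ?_⟩
        rcases hNc w hw with h | h
        · exact absurd (h ▸ hw) hcon
        · exact h
      -- triangle a = x0, b = w1, c = c0
      set a := x0
      set b := w1
      set c := c0
      have hab : H.Adj a b := ha1
      have hbc : H.Adj b c := hadj_cw1.symm
      have hac : H.Adj a c := hadj_cx0.symm
      have hNc' : ∀ w, H.Adj c w → w = a ∨ w = b := hNc
      have hXa : XX a := ⟨w1, w2, h12, ha1, ha2⟩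
      have hXb : XX b := ⟨a, c, hac.ne, hab.symm, hbc⟩
      have hXc : XX c := ⟨a, b, hab.ne, hac.symm, hbc.symm⟩
      have hNa : ∀ w, H.Adj a w → w = b ∨ w = c := by
        intro d hd
        by_contra hcon
        push_neg at hcon
        obtain ⟨hdb, hdc⟩ := hcon
        obtain ⟨s, hsb, hsd, hadj_sd, hNs⟩ := Q' b (hPX b hXb) d hdb
        have hsc : s ≠ c := by
          intro h
          subst h
          rcases hNc' d hadj_sd with h | h
          · exact hd.ne h.symm
          · exact hdb h
        have hsa : s ≠ a := by
          intro h
          subst h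
          rcases hNs c hac with h | h
          · exact hbc.ne h.symm
          · exact hdc h.symm
        have hXd : XX d := ⟨a, s, Ne.symm hsa, hd.symm, hadj_sd.symm⟩
        obtain ⟨u', h1, h2, hadj_u'c, hNu'⟩ := Q' d (hPX d hXd) c (Ne.symm hdc)
        rcases hNc' u' hadj_u'c.symm with h | h
        · subst h
          rcases hNu' b hab with h' | h'
          · exact hdb h'.symm
          · exact hbc.ne h'
        · subst h
          rcases hNu' a hab.symm with h' | h'
          · exact hd.ne h'
          · exact hac.ne h'
      have hNb : ∀ w, H.Adj b w → w = a ∨ w = c := by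
        intro d hd
        by_contra hcon
        push_neg at hcon
        obtain ⟨hda, hdc⟩ := hcon
        have hdb : d ≠ b := hd.ne'
        obtain ⟨s, hsa, hsd, hadj_sd, hNs⟩ := Q' a (hPX a hXa) d hda
        have hsb : s ≠ b := by
          intro h
          subst h
          rcases hNs c hbc with h | h
          · exact hac.ne h.symm
          · exact hdc h.symm
        have hsc : s ≠ c := by
          intro h
          subst h
          rcases hNc' d hadj_sd with h | h
          · exact hda h
          · exact hdb h
        have hXd : XX d := ⟨b, s, Ne.symm hsb, hd.symm, hadj_sd.symm⟩
        obtain ⟨u', h1, h2, hadj_u'c, hNu'⟩ := Q' d (hPX d hXd) c (Ne.symm hdc)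
        rcases hNc' u' hadj_u'c.symm with h | h
        · subst h
          rcases hNu' b hab with h' | h'
          · exact hdb h'.symm
          · exact hbc.ne h'
        · subst h
          rcases hNu' a hab.symm with h' | h'
          · exact hda h'.symm
          · exact hac.ne h'
      have hOut : ∀ v, v ≠ a → v ≠ b → v ≠ c → ¬XX v := by
        rintro v h1 h2 h3 hXv
        obtain ⟨s, hsv, hsa, hadj_sa, hNs⟩ := Q' v (hPX v hXv) a (Ne.symm h1)
        rcases hNa s hadj_sa.symm with h | h
        · subst h
          rcases hNs c hbc with h' | h'
          · exact h3 h'.symm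
          · exact hac.ne h'.symm
        · subst h
          rcases hNs b hbc.symm with h' | h'
          · exact h2 h'.symm
          · exact hab.ne h'.symm
      have hTne : ∃ d : V, d ≠ a ∧ d ≠ b ∧ d ≠ c := by
        by_contra hcon
        push_neg at hcon
        obtain ⟨u0, v0, hp⟩ := hpair
        have hcases : ∀ d : V, d = a ∨ d = b ∨ d = c := by
          intro d
          rcases eq_or_ne d a with h | h
          · exact Or.inl h
          rcases eq_or_ne d b with h' | h'
          · exact Or.inr (Or.inl h')
          · exact Or.inr (Or.inr (hcon d h h'))
        have key : ∀ w : V, ¬H.Adj u0 w ∨ ¬H.Adj v0 w := hp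
        rcases hcases u0 with rfl | rfl | rfl <;> rcases hcases v0 with rfl | rfl | rfl
        · rcases key b with h | h <;> exact h hab
        · rcases key c with h | h
          · exact h hac
          · exact h hbc
        · rcases key b with h | h
          · exact h hab
          · exact h hbc.symm
        · rcases key c with h | h
          · exact h hbc
          · exact h hac
        · rcases key a with h | h <;> exact h hab.symm
        · rcases key a with h | h
          · exact h hab.symm
          · exact h hac.symm
        · rcases key b with h | h
          · exact h hbc.symm
          · exact h hab
        · rcases key a with h | h
          · exact h hac.symm
          · exact h hab.symm
        · rcases key a with h | h <;> exact h hac.symm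
      refine ⟨a, b, c, hab.ne, hac.ne, hbc.ne, hab, hac, hbc, hNa, hNb, hNc', hTne, ?_⟩
      rintro v ⟨h1, h2, h3⟩
      obtain ⟨w, hw⟩ := hni v
      refine ⟨w, ⟨?_, ?_, ?_⟩, hw, fun z hz => ?_⟩
      · intro h
        subst h
        rcases hNa v hw.symm with h | h
        exacts [h2 h, h3 h]
      · intro h
        subst h
        rcases hNb v hw.symm with h | h
        exacts [h1 h, h3 h]
      · intro h
        subst h
        rcases hNc' v hw.symm with h | h
        exacts [h1 h, h2 h]
      · by_contra hzw
        exact hOut v h1 h2 h3 ⟨z, w, hzw, hz, hw⟩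
  · -- no vertex with two neighbors: StI
    left
    push_neg at hX
    refine ⟨hne, fun v _ => ?_⟩
    obtain ⟨w, hw⟩ := hni v
    refine ⟨w, trivial, hw, fun x hx => ?_⟩
    by_contra hxw
    exact hX v ⟨x, w, hxw, hx, hw⟩

end Part3

section Part3b
variable {V : Type*} {H : SimpleGraph V}


theorem stI_condW (h : StI H) : CondW H := by
  obtain ⟨hne, hm⟩ := h
  have partner : ∀ y : V, ∃ w, H.Adj y w ∧ (∀ x, H.Adj y x → x = w) ∧
      (∀ x, H.Adj w x → x = y) := by
    intro y
    obtain ⟨w, -, h1, h2, h3⟩ := hm.partner (Set.mem_univ y)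
    exact ⟨w, h1, h2, h3⟩
  obtain ⟨v0⟩ := id hne
  obtain ⟨w0, hadj0, hu0, hu0'⟩ := partner v0
  refine ⟨hne, fun u => ⟨(partner u).choose, (partner u).choose_spec.1⟩,
    ⟨v0, w0, fun w => ?_⟩, fun y => ?_, fun y z hzy hniso => ?_⟩
  · by_cases h : H.Adj v0 w
    · rw [hu0 w h]
      exact Or.inr H.irrefl
    · exact Or.inl h
  · obtain ⟨p, hadj, hup, hup'⟩ := partner y
    exact ⟨p, hadj.ne', p, hadj.ne', fun w hwy => Or.inl (fun hA => hwy (hup' w hA))⟩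
  · obtain ⟨p, hadj, hup, hup'⟩ := partner y
    obtain ⟨w, hwy, hA⟩ := hniso p hadj.ne'
    exact absurd (hup' w hA) hwy

theorem stIII_condW (h : StIII H) : CondW H := by
  obtain ⟨a, b, c, hab', hac', hbc', hab, hbc, hnac, hNa, hNb, hNc, hm⟩ := h
  have partner : ∀ y : V, y ≠ a → y ≠ b → y ≠ c →
      ∃ w, w ≠ a ∧ w ≠ b ∧ w ≠ c ∧ H.Adj y w ∧ (∀ x, H.Adj y x → x = w) ∧
        (∀ x, H.Adj w x → x = y) := by
    intro y h1 h2 h3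
    obtain ⟨w, hwB, hA, hu, hu'⟩ :=
      hm.partner (show y ∈ {v | v ≠ a ∧ v ≠ b ∧ v ≠ c} from ⟨h1, h2, h3⟩)
    exact ⟨w, hwB.1, hwB.2.1, hwB.2.2, hA, hu, hu'⟩
  refine ⟨⟨a⟩, ?_, ⟨a, b, fun w => ?_⟩, fun y => ?_, fun y z hzy hniso => ?_⟩
  · intro u
    by_cases h1 : u = a
    · exact ⟨b, h1 ▸ hab⟩
    by_cases h2 : u = b
    · exact ⟨a, h2 ▸ hab.symm⟩
    by_cases h3 : u = c
    · exact ⟨b, h3 ▸ hbc.symm⟩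
    · obtain ⟨w, -, -, -, hA, -⟩ := partner u h1 h2 h3
      exact ⟨w, hA⟩
  · by_cases h1 : H.Adj a w
    · rw [hNa w h1]
      exact Or.inr H.irrefl
    · exact Or.inl h1
  · by_cases hyb : y = b
    · subst hyb
      exact ⟨a, hab', a, hab', fun w hwb => Or.inl (fun hA => hwb (hNa w hA))⟩
    by_cases hya : y = a
    · subst hya
      refine ⟨c, Ne.symm hac', b, Ne.symm hab', fun w hwa => ?_⟩
      by_cases hA : H.Adj c w
      · rw [hNc w hA]
        exact Or.inr H.irrefl
      · exact Or.inl hA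
    · refine ⟨a, fun h => hya h.symm, b, fun h => hyb h.symm, fun w hwy => ?_⟩
      by_cases hA : H.Adj a w
      · rw [hNa w hA]
        exact Or.inr H.irrefl
      · exact Or.inl hA
  · by_cases hyb : y = b
    · subst hyb
      obtain ⟨w, hwb, hA⟩ := hniso a hab'
      exact absurd (hNa w hA) hwb
    by_cases hya : y = a
    · subst hya
      right
      by_cases hzb : z = b
      · subst hzb
        exact ⟨c, Ne.symm hac', Ne.symm hbc', fun w hw => Or.inr (hNc w hw)⟩
      by_cases hzc : z = c
      · subst hzc
        exact ⟨b, Ne.symm hab', hbc', fun w hw => hNb w hw⟩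
      · obtain ⟨p, hpa, hpb, hpc, hA, hu, hu'⟩ := partner z hzy hzb hzc
        exact ⟨p, hpa, hA.ne', fun w hw => Or.inr (hu' w hw)⟩
    by_cases hyc : y = c
    · subst hyc
      right
      by_cases hzb : z = b
      · subst hzb
        exact ⟨a, hac', hab', fun w hw => Or.inr (hNa w hw)⟩
      by_cases hza : z = a
      · subst hza
        exact ⟨b, hbc', Ne.symm hab',
          fun w hw => (hNb w hw).elim Or.inr Or.inl⟩
      · obtain ⟨p, hpa, hpb, hpc, hA, hu, hu'⟩ := partner z hza hzb hzy
        exact ⟨p, hpc, hA.ne', fun w hw => Or.inr (hu' w hw)⟩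
    · obtain ⟨p, hpa, hpb, hpc, hA, hu, hu'⟩ := partner y hya hyb hyc
      obtain ⟨w, hwy, hA'⟩ := hniso p hA.ne'
      exact absurd (hu' w hA') hwy

theorem stII_condW (h : StII H) : CondW H := by
  obtain ⟨a, b, c, hab', hac', hbc', hab, hac, hbc, hNa, hNb, hNc, ⟨d, hda, hdb, hdc⟩, hm⟩ := h
  have partner : ∀ y : V, y ≠ a → y ≠ b → y ≠ c →
      ∃ w, w ≠ a ∧ w ≠ b ∧ w ≠ c ∧ H.Adj y w ∧ (∀ x, H.Adj y x → x = w) ∧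
        (∀ x, H.Adj w x → x = y) := by
    intro y h1 h2 h3
    obtain ⟨w, hwB, hA, hu, hu'⟩ :=
      hm.partner (show y ∈ {v | v ≠ a ∧ v ≠ b ∧ v ≠ c} from ⟨h1, h2, h3⟩)
    exact ⟨w, hwB.1, hwB.2.1, hwB.2.2, hA, hu, hu'⟩
  obtain ⟨d', h'a, h'b, h'c, hAd, hud, hud'⟩ := partner d hda hdb hdc
  refine ⟨⟨a⟩, ?_, ⟨d, d', fun w => ?_⟩, fun y => ?_, fun y z hzy hniso => ?_⟩
  · intro u
    by_cases h1 : u = a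
    · exact ⟨b, h1 ▸ hab⟩
    by_cases h2 : u = b
    · exact ⟨a, h2 ▸ hab.symm⟩
    by_cases h3 : u = c
    · exact ⟨a, h3 ▸ hac.symm⟩
    · obtain ⟨w, -, -, -, hA, -⟩ := partner u h1 h2 h3
      exact ⟨w, hA⟩
  · by_cases h1 : H.Adj d w
    · rw [hud w h1]
      exact Or.inr H.irrefl
    · exact Or.inl h1
  · by_cases hyd : y = d
    · subst hyd
      exact ⟨d', hAd.ne', d', hAd.ne', fun w hwd => Or.inl (fun hA => hwd (hud' w hA))⟩
    by_cases hyd' : y = d'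
    · subst hyd'
      exact ⟨d, hAd.ne, d, hAd.ne, fun w hwd' => Or.inl (fun hA => hwd' (hud w hA))⟩
    · refine ⟨d, fun h => hyd h.symm, d', fun h => hyd' h.symm, fun w hwy => ?_⟩
      by_cases hA : H.Adj d w
      · rw [hud w hA]
        exact Or.inr H.irrefl
      · exact Or.inl hA
  · by_cases hya : y = a
    · subst hya
      right
      by_cases hzb : z = b
      · subst hzb
        exact ⟨c, Ne.symm hac', Ne.symm hbc', fun w hw => hNc w hw⟩
      by_cases hzc : z = c
      · subst hzc
        exact ⟨b, Ne.symm hab', hbc', fun w hw => hNb w hw⟩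
      · obtain ⟨p, hpa, hpb, hpc, hA, hu, hu'⟩ := partner z hzy hzb hzc
        exact ⟨p, hpa, hA.ne', fun w hw => Or.inr (hu' w hw)⟩
    by_cases hyb : y = b
    · subst hyb
      right
      by_cases hza : z = a
      · subst hza
        exact ⟨c, Ne.symm hbc', Ne.symm hac', fun w hw => (hNc w hw).elim Or.inr Or.inl⟩
      by_cases hzc : z = c
      · subst hzc
        exact ⟨a, hab', hac', fun w hw => hNa w hw⟩
      · obtain ⟨p, hpa, hpb, hpc, hA, hu, hu'⟩ := partner z hza hzy hzc
        exact ⟨p, hpb, hA.ne', fun w hw => Or.inr (hu' w hw)⟩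
    by_cases hyc : y = c
    · subst hyc
      right
      by_cases hza : z = a
      · subst hza
        exact ⟨b, hbc', Ne.symm hab', fun w hw => (hNb w hw).elim Or.inr Or.inl⟩
      by_cases hzb : z = b
      · subst hzb
        exact ⟨a, hac', hab', fun w hw => (hNa w hw).elim Or.inr Or.inl⟩
      · obtain ⟨p, hpa, hpb, hpc, hA, hu, hu'⟩ := partner z hza hzb hzy
        exact ⟨p, hpc, hA.ne', fun w hw => Or.inr (hu' w hw)⟩
    · obtain ⟨p, hpa, hpb, hpc, hA, hu, hu'⟩ := partner y hya hyb hyc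
      obtain ⟨w, hwy, hA'⟩ := hniso p hA.ne'
      exact absurd (hu' w hA') hwy

end Part3b

section Part4
set_option linter.unusedSectionVars false
variable {V : Type*} [Fintype V] {H : SimpleGraph V}
end Part4

lemma fin2_cases (j : Fin 2) : j = 0 ∨ j = 1 := by revert j; decide

set_option linter.unusedSectionVars false
section Part4a
variable {V : Type*} [Fintype V] {H : SimpleGraph V}

theorem matchy_equiv {B : Set V} (hm : Matchy H B) :
    ∃ (m : ℕ) (e : ↥B ≃ Fin m × Fin 2),
      ∀ v w : ↥B, H.Adj v.1 w.1 ↔ (mK2 m).Adj (e v) (e w) := by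
  classical
  have hpa : ∀ v : ↥B, ∃ w : ↥B, H.Adj v.1 w.1 ∧ ∀ x, H.Adj v.1 x → x = w.1 := by
    rintro ⟨v, hv⟩
    obtain ⟨w, hwB, h1, h2⟩ := hm v hv
    exact ⟨⟨w, hwB⟩, h1, h2⟩
  choose pa hadj huniq using hpa
  have hinv : ∀ v, pa (pa v) = v := by
    intro v
    exact Subtype.ext ((huniq (pa v) v.1 (hadj v).symm).symm)
  have hpane : ∀ v, pa v ≠ v := by
    intro v h
    have := hadj v
    rw [h] at this
    exact H.irrefl this
  let r : ↥B → ↥B → Prop := fun v w => w = v ∨ w = pa v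
  have hr_symm : ∀ {v w}, r v w → r w v := by
    rintro v w (rfl | rfl)
    · exact Or.inl rfl
    · exact Or.inr (hinv v).symm
  have hr_trans : ∀ {u v w}, r u v → r v w → r u w := by
    rintro u v w (rfl | rfl) h2
    · exact h2
    · rcases h2 with rfl | rfl
      · exact Or.inr rfl
      · rw [hinv u]
        exact Or.inl rfl
  let s : Setoid ↥B := ⟨r, ⟨fun v => Or.inl rfl, hr_symm, hr_trans⟩⟩
  letI : Fintype ↥B := (Set.toFinite B).fintype
  letI : DecidableEq (Quotient s) := Classical.decEq _
  set m := Fintype.card (Quotient s) with hm'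
  let eQ : Quotient s ≃ Fin m := Fintype.equivFin _
  let f : ↥B → Fin m × Fin 2 := fun v =>
    (eQ (Quotient.mk s v), if (Quotient.mk s v).out = v then 0 else 1)
  let g : Fin m × Fin 2 → ↥B := fun p =>
    if p.2 = 0 then (eQ.symm p.1).out else pa (eQ.symm p.1).out
  have hrel : ∀ v : ↥B, r (Quotient.mk s v).out v := fun v => Quotient.mk_out v
  have hl : Function.LeftInverse g f := by
    intro v
    by_cases h : (Quotient.mk s v).out = v
    · simp only [f, g, h, if_pos rfl]
      rw [Equiv.symm_apply_apply]
      exact h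
    · have hv : v = pa (Quotient.mk s v).out := by
        rcases hrel v with h' | h'
        · exact absurd h'.symm h
        · exact h'
      simp only [f, g, if_neg h]
      norm_num
      exact hv.symm
  have hr : Function.RightInverse g f := by
    rintro ⟨c, j⟩
    rcases fin2_cases j with rfl | rfl
    · simp only [g, f, if_pos rfl]
      rw [Quotient.out_eq, Equiv.apply_symm_apply]
      simp
    · have h1 : (1 : Fin 2) ≠ 0 := by decide
      simp only [g, f, if_neg h1]
      have hq : Quotient.mk s (pa (eQ.symm c).out) = eQ.symm c := by
        have h2 : Quotient.mk s (pa (eQ.symm c).out) = Quotient.mk s ((eQ.symm c).out) :=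
          Quotient.sound (hr_symm (Or.inr rfl))
        rw [h2, Quotient.out_eq]
      rw [hq, Equiv.apply_symm_apply, if_neg (fun h => hpane _ h.symm)]
  let e : ↥B ≃ Fin m × Fin 2 := ⟨f, g, hl, hr⟩
  refine ⟨m, e, fun v w => ?_⟩
  constructor
  · intro hA
    have hvw : v ≠ w := fun h => H.irrefl (h ▸ hA)
    have hwpa : w = pa v := Subtype.ext (huniq v w.1 hA)
    refine ⟨e.injective.ne hvw, Or.inl ?_⟩
    show eQ (Quotient.mk s v) = eQ (Quotient.mk s w)
    congr 1
    exact Quotient.sound (Or.inr hwpa)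
  · rintro ⟨hne, hfst⟩
    have hq : Quotient.mk s v = Quotient.mk s w := by
      have : eQ (Quotient.mk s v) = eQ (Quotient.mk s w) := by
        rcases hfst with h | h
        · exact h
        · exact h.symm
      exact eQ.injective this
    have hx := Quotient.exact hq
    rcases (hx : r v w) with rfl | h
    · exact absurd rfl hne
    · rw [h]
      exact hadj v

lemma fin2_other (j k : Fin 2) (h : k ≠ j) : k = (if j = 0 then 1 else 0) := by
  revert j k; decide

lemma fin2_other_ne (j : Fin 2) : (if j = 0 then (1 : Fin 2) else 0) ≠ j := by
  revert j; decide

theorem stI_iso (h : StI H) : ∃ m, 1 ≤ m ∧ Nonempty (H ≃g mK2 m) := by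
  obtain ⟨hne, hmt⟩ := h
  obtain ⟨m, e, hiff⟩ := matchy_equiv hmt
  let E : V ≃ Fin m × Fin 2 := (Equiv.Set.univ V).symm.trans e
  have hm1 : 1 ≤ m := by
    rcases Nat.eq_zero_or_pos m with rfl | h
    · exact (E hne.some).1.elim0
    · exact h
  refine ⟨m, hm1, ⟨⟨E, ?_⟩⟩⟩
  intro v w
  exact (hiff ⟨v, trivial⟩ ⟨w, trivial⟩).symm

theorem mk2_iso_stI {m : ℕ} (hm : 1 ≤ m) (h : Nonempty (H ≃g mK2 m)) : StI H := by
  obtain ⟨e⟩ := h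
  have hne : Nonempty V := ⟨e.symm (⟨0, hm⟩, 0)⟩
  refine ⟨hne, fun v _ => ?_⟩
  set p := e v with hp
  set w := e.symm (p.1, if p.2 = 0 then 1 else 0) with hw
  have hew : e w = (p.1, if p.2 = 0 then 1 else 0) := e.apply_symm_apply _
  have hadj : H.Adj v w := by
    rw [← e.map_adj_iff, hew]
    refine ⟨?_, Or.inl rfl⟩
    intro hcon
    have := congrArg Prod.snd hcon
    simp only at this
    exact fin2_other_ne p.2 this.symm
  refine ⟨w, trivial, hadj, fun x hx => ?_⟩
  have hax : (mK2 m).Adj (e v) (e x) := e.map_adj_iff.mpr hx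
  obtain ⟨hne', hfst⟩ := hax
  have hfst' : (e v).1 = (e x).1 := by
    rcases hfst with h' | h'
    · exact h'
    · exact h'.symm
  have hsnd : (e x).2 ≠ (e v).2 := by
    intro hcon
    exact hne' (Prod.ext hfst' hcon.symm)
  have : (e x).2 = (if (e v).2 = 0 then 1 else 0) := fin2_other _ _ hsnd
  have hex : e x = ((e v).1, if (e v).2 = 0 then 1 else 0) := Prod.ext hfst'.symm this
  rw [← e.symm_apply_apply x, hex]

end Part4a

lemma fin3_cases (i : Fin 3) : i = 0 ∨ i = 1 ∨ i = 2 := by revert i; decide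

section Part4b
set_option linter.unusedSectionVars false
variable {V : Type*} [Fintype V] {H : SimpleGraph V}


-- adjacency facts for mK2K3
lemma mK2K3_inl_inl {m : ℕ} (p q : Fin m × Fin 2) :
    (mK2K3 m).Adj (Sum.inl p) (Sum.inl q) ↔ (mK2 m).Adj p q := by
  simp [mK2K3, mK2, SimpleGraph.fromRel_adj]

lemma mK2K3_inr_inr {m : ℕ} (i j : Fin 3) :
    (mK2K3 m).Adj (Sum.inr i) (Sum.inr j) ↔ i ≠ j := by
  simp [mK2K3, SimpleGraph.fromRel_adj]

lemma mK2K3_cross {m : ℕ} (i : Fin 3) (p : Fin m × Fin 2) :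
    ¬(mK2K3 m).Adj (Sum.inr i) (Sum.inl p) ∧ ¬(mK2K3 m).Adj (Sum.inl p) (Sum.inr i) := by
  constructor <;> (intro h; simp [mK2K3, SimpleGraph.fromRel_adj] at h)

lemma mK2P3_inl_inl {m : ℕ} (p q : Fin m × Fin 2) :
    (mK2P3 m).Adj (Sum.inl p) (Sum.inl q) ↔ (mK2 m).Adj p q := by
  simp [mK2P3, mK2, SimpleGraph.fromRel_adj]

lemma mK2P3_inr_inr {m : ℕ} (i j : Fin 3) :
    (mK2P3 m).Adj (Sum.inr i) (Sum.inr j) ↔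
      ((i : ℕ) + 1 = (j : ℕ) ∨ (j : ℕ) + 1 = (i : ℕ)) := by
  rw [mK2P3, SimpleGraph.fromRel_adj]
  constructor
  · rintro ⟨-, h⟩
    exact h
  · intro h
    refine ⟨?_, h⟩
    intro hc
    have := Sum.inr_injective hc
    subst this
    omega

lemma mK2P3_cross {m : ℕ} (i : Fin 3) (p : Fin m × Fin 2) :
    ¬(mK2P3 m).Adj (Sum.inr i) (Sum.inl p) ∧ ¬(mK2P3 m).Adj (Sum.inl p) (Sum.inr i) := by
  constructor <;> (intro h; simp [mK2P3, SimpleGraph.fromRel_adj] at h)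

theorem stII_iso (h : StII H) : ∃ m, 1 ≤ m ∧ Nonempty (H ≃g mK2K3 m) := by
  classical
  obtain ⟨a, b, c, hab', hac', hbc', hab, hac, hbc, hNa, hNb, hNc, ⟨d, hd1, hd2, hd3⟩, hmt⟩ := h
  obtain ⟨m, e, hiff⟩ := matchy_equiv hmt
  let f : V → (Fin m × Fin 2) ⊕ Fin 3 := fun v =>
    if h1 : v = a then Sum.inr 0
    else if h2 : v = b then Sum.inr 1
    else if h3 : v = c then Sum.inr 2
    else Sum.inl (e ⟨v, h1, h2, h3⟩)
  let g : (Fin m × Fin 2) ⊕ Fin 3 → V :=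
    Sum.elim (fun p => ((e.symm p : ↥{v | v ≠ a ∧ v ≠ b ∧ v ≠ c}) : V))
      (fun i => if i = 0 then a else if i = 1 then b else c)
  have hfa : f a = Sum.inr 0 := by simp [f]
  have hfb : f b = Sum.inr 1 := by simp [f, Ne.symm hab']
  have hfc : f c = Sum.inr 2 := by simp [f, Ne.symm hac', Ne.symm hbc']
  have hfo : ∀ (v) (h1 : v ≠ a) (h2 : v ≠ b) (h3 : v ≠ c),
      f v = Sum.inl (e ⟨v, h1, h2, h3⟩) := by
    intro v h1 h2 h3
    simp [f, h1, h2, h3]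
  have hl : Function.LeftInverse g f := by
    intro v
    by_cases h1 : v = a
    · subst h1; rw [hfa]; simp [g]
    by_cases h2 : v = b
    · subst h2; rw [hfb]; simp [g]
    by_cases h3 : v = c
    · subst h3; rw [hfc]; simp [g]
    · rw [hfo v h1 h2 h3]
      simp only [g, Sum.elim_inl, Equiv.symm_apply_apply]
  have hr : Function.RightInverse g f := by
    rintro (p | i)
    · simp only [g, Sum.elim_inl]
      have hmem := (e.symm p).2
      rw [hfo (e.symm p).1 hmem.1 hmem.2.1 hmem.2.2]
      exact congrArg Sum.inl (e.apply_symm_apply p)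
    · rcases fin3_cases i with rfl | rfl | rfl <;> simp [g, hfa, hfb, hfc]
  have hm1 : 1 ≤ m := by
    rcases Nat.eq_zero_or_pos m with rfl | h
    · exact (e ⟨d, hd1, hd2, hd3⟩).1.elim0
    · exact h
  refine ⟨m, hm1, ⟨⟨⟨f, g, hl, hr⟩, ?_⟩⟩⟩
  intro v w
  show (mK2K3 m).Adj (f v) (f w) ↔ H.Adj v w
  have hTv : ∀ v : V, v = a ∨ v = b ∨ v = c ∨ (v ≠ a ∧ v ≠ b ∧ v ≠ c) := by tauto
  rcases hTv v with rfl | rfl | rfl | ⟨h1, h2, h3⟩ <;>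
    rcases hTv w with rfl | rfl | rfl | ⟨g1, g2, g3⟩
  · rw [hfa, mK2K3_inr_inr]; simp [H.irrefl]
  · rw [hfa, hfb, mK2K3_inr_inr]; simp [hab]
  · rw [hfa, hfc, mK2K3_inr_inr]; simp [hac]
  · rw [hfa, hfo w g1 g2 g3]
    exact iff_of_false (mK2K3_cross _ _).1 (fun hA => (hNa w hA).elim g2 g3)
  · rw [hfb, hfa, mK2K3_inr_inr]; simp [hab.symm]
  · rw [hfb, mK2K3_inr_inr]; simp [H.irrefl]
  · rw [hfb, hfc, mK2K3_inr_inr]; simp [hbc]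
  · rw [hfb, hfo w g1 g2 g3]
    exact iff_of_false (mK2K3_cross _ _).1 (fun hA => (hNb w hA).elim g1 g3)
  · rw [hfc, hfa, mK2K3_inr_inr]; simp [hac.symm]
  · rw [hfc, hfb, mK2K3_inr_inr]; simp [hbc.symm]
  · rw [hfc, mK2K3_inr_inr]; simp [H.irrefl]
  · rw [hfc, hfo w g1 g2 g3]
    exact iff_of_false (mK2K3_cross _ _).1 (fun hA => (hNc w hA).elim g1 g2)
  · rw [hfo v h1 h2 h3, hfa]
    exact iff_of_false (mK2K3_cross _ _).2 (fun hA => (hNa v hA.symm).elim h2 h3)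
  · rw [hfo v h1 h2 h3, hfb]
    exact iff_of_false (mK2K3_cross _ _).2 (fun hA => (hNb v hA.symm).elim h1 h3)
  · rw [hfo v h1 h2 h3, hfc]
    exact iff_of_false (mK2K3_cross _ _).2 (fun hA => (hNc v hA.symm).elim h1 h2)
  · rw [hfo v h1 h2 h3, hfo w g1 g2 g3, mK2K3_inl_inl]
    exact (hiff ⟨v, h1, h2, h3⟩ ⟨w, g1, g2, g3⟩).symm

theorem stIII_iso (h : StIII H) : ∃ k, Nonempty (H ≃g mK2P3 k) := by
  classical
  obtain ⟨a, b, c, hab', hac', hbc', hab, hbc, hnac, hNa, hNb, hNc, hmt⟩ := h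
  have hnca : ¬H.Adj c a := fun h => hnac h.symm
  obtain ⟨m, e, hiff⟩ := matchy_equiv hmt
  let f : V → (Fin m × Fin 2) ⊕ Fin 3 := fun v =>
    if h1 : v = a then Sum.inr 0
    else if h2 : v = b then Sum.inr 1
    else if h3 : v = c then Sum.inr 2
    else Sum.inl (e ⟨v, h1, h2, h3⟩)
  let g : (Fin m × Fin 2) ⊕ Fin 3 → V :=
    Sum.elim (fun p => ((e.symm p : ↥{v | v ≠ a ∧ v ≠ b ∧ v ≠ c}) : V))
      (fun i => if i = 0 then a else if i = 1 then b else c)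
  have hfa : f a = Sum.inr 0 := by simp [f]
  have hfb : f b = Sum.inr 1 := by simp [f, Ne.symm hab']
  have hfc : f c = Sum.inr 2 := by simp [f, Ne.symm hac', Ne.symm hbc']
  have hfo : ∀ (v) (h1 : v ≠ a) (h2 : v ≠ b) (h3 : v ≠ c),
      f v = Sum.inl (e ⟨v, h1, h2, h3⟩) := by
    intro v h1 h2 h3
    simp [f, h1, h2, h3]
  have hl : Function.LeftInverse g f := by
    intro v
    by_cases h1 : v = a
    · subst h1; rw [hfa]; simp [g]
    by_cases h2 : v = b
    · subst h2; rw [hfb]; simp [g]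
    by_cases h3 : v = c
    · subst h3; rw [hfc]; simp [g]
    · rw [hfo v h1 h2 h3]
      simp only [g, Sum.elim_inl, Equiv.symm_apply_apply]
  have hr : Function.RightInverse g f := by
    rintro (p | i)
    · simp only [g, Sum.elim_inl]
      have hmem := (e.symm p).2
      rw [hfo (e.symm p).1 hmem.1 hmem.2.1 hmem.2.2]
      exact congrArg Sum.inl (e.apply_symm_apply p)
    · rcases fin3_cases i with rfl | rfl | rfl <;> simp [g, hfa, hfb, hfc]
  refine ⟨m, ⟨⟨⟨f, g, hl, hr⟩, ?_⟩⟩⟩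
  intro v w
  show (mK2P3 m).Adj (f v) (f w) ↔ H.Adj v w
  have hTv : ∀ v : V, v = a ∨ v = b ∨ v = c ∨ (v ≠ a ∧ v ≠ b ∧ v ≠ c) := by tauto
  rcases hTv v with rfl | rfl | rfl | ⟨h1, h2, h3⟩ <;>
    rcases hTv w with rfl | rfl | rfl | ⟨g1, g2, g3⟩
  · rw [hfa, mK2P3_inr_inr]; simp [H.irrefl]
  · rw [hfa, hfb, mK2P3_inr_inr]; simp [hab]
  · rw [hfa, hfc, mK2P3_inr_inr]; simp [hnac]
  · rw [hfa, hfo w g1 g2 g3]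
    exact iff_of_false (mK2P3_cross _ _).1 (fun hA => g2 (hNa w hA))
  · rw [hfb, hfa, mK2P3_inr_inr]; simp [hab.symm]
  · rw [hfb, mK2P3_inr_inr]; simp [H.irrefl]
  · rw [hfb, hfc, mK2P3_inr_inr]; simp [hbc]
  · rw [hfb, hfo w g1 g2 g3]
    exact iff_of_false (mK2P3_cross _ _).1 (fun hA => (hNb w hA).elim g1 g3)
  · rw [hfc, hfa, mK2P3_inr_inr]; simp [hnca]
  · rw [hfc, hfb, mK2P3_inr_inr]; simp [hbc.symm]
  · rw [hfc, mK2P3_inr_inr]; simp [H.irrefl]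
  · rw [hfc, hfo w g1 g2 g3]
    exact iff_of_false (mK2P3_cross _ _).1 (fun hA => g2 (hNc w hA))
  · rw [hfo v h1 h2 h3, hfa]
    exact iff_of_false (mK2P3_cross _ _).2 (fun hA => h2 (hNa v hA.symm))
  · rw [hfo v h1 h2 h3, hfb]
    exact iff_of_false (mK2P3_cross _ _).2 (fun hA => (hNb v hA.symm).elim h1 h3)
  · rw [hfo v h1 h2 h3, hfc]
    exact iff_of_false (mK2P3_cross _ _).2 (fun hA => h2 (hNc v hA.symm))
  · rw [hfo v h1 h2 h3, hfo w g1 g2 g3, mK2P3_inl_inl]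
    exact (hiff ⟨v, h1, h2, h3⟩ ⟨w, g1, g2, g3⟩).symm

lemma fin2_other' (j k : Fin 2) (h : k ≠ j) : k = (if j = 0 then 1 else 0) := by
  revert j k; decide

lemma fin2_other_ne' (j : Fin 2) : (if j = 0 then (1 : Fin 2) else 0) ≠ j := by
  revert j; decide

theorem iso_matchy {m : ℕ} {K : SimpleGraph ((Fin m × Fin 2) ⊕ Fin 3)}
    (hinl : ∀ p q, K.Adj (Sum.inl p) (Sum.inl q) ↔ (mK2 m).Adj p q)
    (hcross : ∀ (i : Fin 3) (p : Fin m × Fin 2), ¬K.Adj (Sum.inl p) (Sum.inr i))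
    (e : H ≃g K) :
    Matchy H {v | v ≠ e.symm (Sum.inr 0) ∧ v ≠ e.symm (Sum.inr 1) ∧ v ≠ e.symm (Sum.inr 2)} := by
  rintro v ⟨h1, h2, h3⟩
  rcases hev : e v with p | i
  case inr =>
    exfalso
    rcases fin3_cases i with rfl | rfl | rfl
    · exact h1 (by rw [← e.symm_apply_apply v, hev])
    · exact h2 (by rw [← e.symm_apply_apply v, hev])
    · exact h3 (by rw [← e.symm_apply_apply v, hev])
  case inl =>
    set w := e.symm (Sum.inl (p.1, if p.2 = 0 then 1 else 0)) with hwdef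
    have hew : e w = Sum.inl (p.1, if p.2 = 0 then 1 else 0) := e.apply_symm_apply _
    have hwB : w ∈ {v | v ≠ e.symm (Sum.inr 0) ∧ v ≠ e.symm (Sum.inr 1) ∧ v ≠ e.symm (Sum.inr 2)} := by
      refine ⟨?_, ?_, ?_⟩ <;>
        (intro hq; rw [hq, e.apply_symm_apply] at hew; exact Sum.inr_ne_inl hew)
    have hadj : H.Adj v w := by
      rw [← e.map_adj_iff, hev, hew, hinl]
      refine ⟨?_, Or.inl rfl⟩
      intro hcon
      have := congrArg Prod.snd hcon
      simp only at this
      exact fin2_other_ne' p.2 this.symm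
    refine ⟨w, hwB, hadj, fun x hx => ?_⟩
    have hKadj := e.map_adj_iff.mpr hx
    rw [hev] at hKadj
    rcases hex : e x with q | i
    · rw [hex, hinl] at hKadj
      obtain ⟨hne, hfst⟩ := hKadj
      have hfst' : p.1 = q.1 := by
        rcases hfst with h' | h'
        · exact h'
        · exact h'.symm
      have hsnd : q.2 ≠ p.2 := by
        intro hcon
        exact hne (Prod.ext hfst' hcon.symm)
      have hq2 : q.2 = (if p.2 = 0 then 1 else 0) := fin2_other' _ _ hsnd
      have hq : q = (p.1, if p.2 = 0 then 1 else 0) := Prod.ext hfst'.symm hq2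
      rw [← e.symm_apply_apply x, hex, hq]
    · rw [hex] at hKadj
      exact absurd hKadj (hcross i p)

theorem mk2k3_iso_stII {m : ℕ} (hm : 1 ≤ m) (h : Nonempty (H ≃g mK2K3 m)) : StII H := by
  obtain ⟨e⟩ := h
  have hsne : ∀ (i j : Fin 3), i ≠ j → e.symm (Sum.inr i) ≠ e.symm (Sum.inr j) := by
    intro i j hij hq
    exact hij (Sum.inr_injective (e.symm.injective hq))
  have hAdj : ∀ (i j : Fin 3), i ≠ j → H.Adj (e.symm (Sum.inr i)) (e.symm (Sum.inr j)) := by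
    intro i j hij
    rw [← e.map_adj_iff, e.apply_symm_apply, e.apply_symm_apply, mK2K3_inr_inr]
    exact hij
  have hN : ∀ (i : Fin 3) (x : V), H.Adj (e.symm (Sum.inr i)) x →
      ∃ j : Fin 3, j ≠ i ∧ x = e.symm (Sum.inr j) := by
    intro i x hx
    have hKadj := e.map_adj_iff.mpr hx
    rw [e.apply_symm_apply] at hKadj
    rcases hex : e x with q | j
    · rw [hex] at hKadj
      exact absurd hKadj ((mK2K3_cross i q).1)
    · rw [hex, mK2K3_inr_inr] at hKadj
      exact ⟨j, Ne.symm hKadj, by rw [← e.symm_apply_apply x, hex]⟩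
  have h01 : (0 : Fin 3) ≠ 1 := by decide
  have h02 : (0 : Fin 3) ≠ 2 := by decide
  have h12 : (1 : Fin 3) ≠ 2 := by decide
  refine ⟨e.symm (Sum.inr 0), e.symm (Sum.inr 1), e.symm (Sum.inr 2),
    hsne 0 1 h01, hsne 0 2 h02, hsne 1 2 h12,
    hAdj 0 1 h01, hAdj 0 2 h02, hAdj 1 2 h12, ?_, ?_, ?_, ?_, ?_⟩
  · intro x hx
    obtain ⟨j, hj, rfl⟩ := hN 0 x hx
    rcases fin3_cases j with rfl | rfl | rfl
    · exact absurd rfl hj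
    · exact Or.inl rfl
    · exact Or.inr rfl
  · intro x hx
    obtain ⟨j, hj, rfl⟩ := hN 1 x hx
    rcases fin3_cases j with rfl | rfl | rfl
    · exact Or.inl rfl
    · exact absurd rfl hj
    · exact Or.inr rfl
  · intro x hx
    obtain ⟨j, hj, rfl⟩ := hN 2 x hx
    rcases fin3_cases j with rfl | rfl | rfl
    · exact Or.inl rfl
    · exact Or.inr rfl
    · exact absurd rfl hj
  · refine ⟨e.symm (Sum.inl (⟨0, hm⟩, 0)), ?_, ?_, ?_⟩ <;>
      (intro hq; exact Sum.inl_ne_inr (e.symm.injective hq))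
  · exact iso_matchy mK2K3_inl_inl (fun i p => (mK2K3_cross i p).2) e

theorem mk2p3_iso_stIII {m : ℕ} (h : Nonempty (H ≃g mK2P3 m)) : StIII H := by
  obtain ⟨e⟩ := h
  have hsne : ∀ (i j : Fin 3), i ≠ j → e.symm (Sum.inr i) ≠ e.symm (Sum.inr j) := by
    intro i j hij hq
    exact hij (Sum.inr_injective (e.symm.injective hq))
  have hAdj : ∀ (i j : Fin 3), ((i : ℕ) + 1 = (j : ℕ) ∨ (j : ℕ) + 1 = (i : ℕ)) →
      H.Adj (e.symm (Sum.inr i)) (e.symm (Sum.inr j)) := by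
    intro i j hij
    rw [← e.map_adj_iff, e.apply_symm_apply, e.apply_symm_apply, mK2P3_inr_inr]
    exact hij
  have hN : ∀ (i : Fin 3) (x : V), H.Adj (e.symm (Sum.inr i)) x →
      ∃ j : Fin 3, ((i : ℕ) + 1 = (j : ℕ) ∨ (j : ℕ) + 1 = (i : ℕ)) ∧
        x = e.symm (Sum.inr j) := by
    intro i x hx
    have hKadj := e.map_adj_iff.mpr hx
    rw [e.apply_symm_apply] at hKadj
    rcases hex : e x with q | j
    · rw [hex] at hKadj
      exact absurd hKadj ((mK2P3_cross i q).1)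
    · rw [hex, mK2P3_inr_inr] at hKadj
      exact ⟨j, hKadj, by rw [← e.symm_apply_apply x, hex]⟩
  have h01 : (0 : Fin 3) ≠ 1 := by decide
  have h02 : (0 : Fin 3) ≠ 2 := by decide
  have h12 : (1 : Fin 3) ≠ 2 := by decide
  refine ⟨e.symm (Sum.inr 0), e.symm (Sum.inr 1), e.symm (Sum.inr 2),
    hsne 0 1 h01, hsne 0 2 h02, hsne 1 2 h12,
    hAdj 0 1 (by decide), hAdj 1 2 (by decide), ?_, ?_, ?_, ?_, ?_⟩
  · intro hx
    obtain ⟨j, hj, hxx⟩ := hN 0 (e.symm (Sum.inr 2)) hx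
    have : j = 2 := Sum.inr_injective (e.symm.injective hxx.symm)
    subst this
    revert hj
    decide
  · intro x hx
    obtain ⟨j, hj, rfl⟩ := hN 0 x hx
    have : j = 1 := by
      rcases fin3_cases j with rfl | rfl | rfl
      · revert hj; decide
      · rfl
      · revert hj; decide
    rw [this]
  · intro x hx
    obtain ⟨j, hj, rfl⟩ := hN 1 x hx
    rcases fin3_cases j with rfl | rfl | rfl
    · exact Or.inl rfl
    · exact absurd hj (by decide)
    · exact Or.inr rfl
  · intro x hx
    obtain ⟨j, hj, rfl⟩ := hN 2 x hx
    have : j = 1 := by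
      rcases fin3_cases j with rfl | rfl | rfl
      · revert hj; decide
      · rfl
      · revert hj; decide
    rw [this]
  · exact iso_matchy mK2P3_inl_inl (fun i p => (mK2P3_cross i p).2) e

end Part4b

/-- A graph G is weak bicritical with γ(G) = 2 iff there is m ≥ 1 such that the complement
of G is isomorphic to mK₂, mK₂ ∪ K₃, or (m−1)K₂ ∪ P₃.  In particular, G is 2-critical iff
the complement of G is isomorphic to mK₂ for some m ≥ 1. -/
theorem stmt_6 {V : Type*} [Fintype V] (G : SimpleGraph V) :
    ((WeakBicriticalOn G Set.univ ∧ domNum G = 2) ↔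
      ∃ m : ℕ, 1 ≤ m ∧
        (Nonempty (Gᶜ ≃g mK2 m) ∨ Nonempty (Gᶜ ≃g mK2K3 m) ∨
          Nonempty (Gᶜ ≃g mK2P3 (m - 1)))) ∧
    ((CriticalOn G Set.univ ∧ domNum G = 2) ↔
      ∃ m : ℕ, 1 ≤ m ∧ Nonempty (Gᶜ ≃g mK2 m)) := by
  constructor
  · constructor
    · intro h
      rcases condW_structure (wbc_iff_condW.mp h) with h1 | h2 | h3
      · obtain ⟨m, hm, hiso⟩ := stI_iso h1
        exact ⟨m, hm, Or.inl hiso⟩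
      · obtain ⟨m, hm, hiso⟩ := stII_iso h2
        exact ⟨m, hm, Or.inr (Or.inl hiso)⟩
      · obtain ⟨k, hiso⟩ := stIII_iso h3
        exact ⟨k + 1, by omega, Or.inr (Or.inr hiso)⟩
    · rintro ⟨m, hm, hiso | hiso | hiso⟩
      · exact wbc_iff_condW.mpr (stI_condW (mk2_iso_stI hm hiso))
      · exact wbc_iff_condW.mpr (stII_condW (mk2k3_iso_stII hm hiso))
      · exact wbc_iff_condW.mpr (stIII_condW (mk2p3_iso_stIII hiso))
  · constructor
    · intro h
      exact stI_iso (condC_iff_stI.mp (crit_iff_condC.mp h))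
    · rintro ⟨m, hm, hiso⟩
      exact crit_iff_condC.mpr (condC_iff_stI.mpr (mk2_iso_stI hm hiso))
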